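/- Let G be a group, let τ ∈ G be any element, and let F be a factorization in G whose ordered product is a central element of G. If F is Hurwitz equivalent to a factorization of the form τ·F' for some factorization F', then the factorization (F)_τ obtained from F by simultaneous conjugation of all entries by τ is Hurwitz equivalent to F. -/

import Mathlib

/-- A single Hurwitz move: replace two consecutive entries `(x, y)` by `(x y x⁻¹, x)`. -/
def HurwitzMove {G : Type*} [Group G] (F F' : List G) : Prop :=
  ∃ (l₁ l₂ : List G) (x y : G),
    F = l₁ ++ x :: y :: l₂ ∧ F' = l₁ ++ (x * y * x⁻¹) :: x :: l₂

/-- Hurwitz equivalence: the reflexive-symmetric-transitive closure of Hurwitz moves.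
(The symmetric closure accounts for the inverse move `(x, y) ↦ (y, y⁻¹ x y)`.) -/
def HurwitzEquiv {G : Type*} [Group G] : List G → List G → Prop :=
  Relation.EqvGen HurwitzMove

/-- `n`-fold concatenation of a factorization with itself. -/
def fpow {G : Type*} (F : List G) (n : ℕ) : List G :=
  (List.replicate n F).flatten

/-- Simultaneous conjugation of all entries of a factorization by `φ`: `τ ↦ φ⁻¹ τ φ`. -/
def fconj {G : Type*} [Group G] (F : List G) (φ : G) : List G :=
  F.map fun τ => φ⁻¹ * τ * φ

namespace HurwitzAux

variable {G : Type*} [Group G]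

theorem move_cons {F F' : List G} (a : G) (h : HurwitzMove F F') :
    HurwitzMove (a :: F) (a :: F') := by
  obtain ⟨l₁, l₂, x, y, h1, h2⟩ := h
  exact ⟨a :: l₁, l₂, x, y, by simp [h1], by simp [h2]⟩

theorem equiv_cons {F F' : List G} (a : G) (h : HurwitzEquiv F F') :
    HurwitzEquiv (a :: F) (a :: F') := by
  induction h with
  | rel _ _ h => exact Relation.EqvGen.rel _ _ (move_cons a h)
  | refl _ => exact Relation.EqvGen.refl _
  | symm _ _ _ ih => exact Relation.EqvGen.symm _ _ ih
  | trans _ _ _ _ _ ih₁ ih₂ => exact Relation.EqvGen.trans _ _ _ ih₁ ih₂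

theorem move_prod {F F' : List G} (h : HurwitzMove F F') : F.prod = F'.prod := by
  obtain ⟨l₁, l₂, x, y, h1, h2⟩ := h
  subst h1; subst h2
  simp [List.prod_append, mul_assoc]

theorem equiv_prod {F F' : List G} (h : HurwitzEquiv F F') : F.prod = F'.prod := by
  induction h with
  | rel _ _ h => exact move_prod h
  | refl _ => rfl
  | symm _ _ _ ih => exact ih.symm
  | trans _ _ _ _ _ ih₁ ih₂ => exact ih₁.trans ih₂

theorem move_fconj {F F' : List G} (φ : G) (h : HurwitzMove F F') :
    HurwitzMove (fconj F φ) (fconj F' φ) := by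
  obtain ⟨l₁, l₂, x, y, h1, h2⟩ := h
  refine ⟨fconj l₁ φ, fconj l₂ φ, φ⁻¹ * x * φ, φ⁻¹ * y * φ, ?_, ?_⟩
  · simp [h1, fconj]
  · have : φ⁻¹ * (x * y * x⁻¹) * φ =
        (φ⁻¹ * x * φ) * (φ⁻¹ * y * φ) * (φ⁻¹ * x * φ)⁻¹ := by group
    simp [h2, fconj, this]

theorem equiv_fconj {F F' : List G} (φ : G) (h : HurwitzEquiv F F') :
    HurwitzEquiv (fconj F φ) (fconj F' φ) := by
  induction h with
  | rel _ _ h => exact Relation.EqvGen.rel _ _ (move_fconj φ h)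
  | refl _ => exact Relation.EqvGen.refl _
  | symm _ _ _ ih => exact Relation.EqvGen.symm _ _ ih
  | trans _ _ _ _ _ ih₁ ih₂ => exact Relation.EqvGen.trans _ _ _ ih₁ ih₂

/-- Slide `τ` to the right with forward moves: each entry gets conjugated by `τ⁻¹`. -/
theorem slide_forward (L : List G) : ∀ τ : G,
    HurwitzEquiv (τ :: L) (fconj L τ⁻¹ ++ [τ]) := by
  induction L with
  | nil => intro τ; simpa [fconj, HurwitzEquiv] using Relation.EqvGen.refl (r := HurwitzMove) [τ]
  | cons y L ih =>
    intro τ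
    have m1 : HurwitzMove (τ :: y :: L) ((τ * y * τ⁻¹) :: τ :: L) :=
      ⟨[], L, τ, y, by simp, by simp⟩
    have h2 : HurwitzEquiv ((τ * y * τ⁻¹) :: τ :: L)
        ((τ * y * τ⁻¹) :: (fconj L τ⁻¹ ++ [τ])) := equiv_cons _ (ih τ)
    have : fconj (y :: L) τ⁻¹ ++ [τ] = (τ * y * τ⁻¹) :: (fconj L τ⁻¹ ++ [τ]) := by
      simp [fconj]
    rw [this]
    exact Relation.EqvGen.trans _ _ _ (Relation.EqvGen.rel _ _ m1) h2

/-- Slide `τ` to the right with inverse moves: it comes out conjugated by the product. -/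
theorem slide_backward (L : List G) : ∀ τ : G,
    HurwitzEquiv (τ :: L) (L ++ [L.prod⁻¹ * τ * L.prod]) := by
  induction L with
  | nil => intro τ; simpa [HurwitzEquiv] using Relation.EqvGen.refl (r := HurwitzMove) [τ]
  | cons y L ih =>
    intro τ
    have m1 : HurwitzMove (y :: (y⁻¹ * τ * y) :: L) (τ :: y :: L) :=
      ⟨[], L, y, y⁻¹ * τ * y, by simp, by
        have : y * (y⁻¹ * τ * y) * y⁻¹ = τ := by group
        simp [this]⟩
    have h2 : HurwitzEquiv (y :: (y⁻¹ * τ * y) :: L)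
        (y :: (L ++ [L.prod⁻¹ * (y⁻¹ * τ * y) * L.prod])) := equiv_cons _ (ih _)
    have heq : (y :: L) ++ [(y :: L).prod⁻¹ * τ * (y :: L).prod] =
        y :: (L ++ [L.prod⁻¹ * (y⁻¹ * τ * y) * L.prod]) := by
      simp [mul_assoc]
    rw [heq]
    exact Relation.EqvGen.trans _ _ _
      (Relation.EqvGen.symm _ _ (Relation.EqvGen.rel _ _ m1)) h2

theorem fconj_fconj (L : List G) (φ : G) : fconj (fconj L φ) φ⁻¹ = L := by
  induction L with
  | nil => rfl
  | cons a L ih =>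
    simp only [fconj, List.map_cons, List.cons.injEq] at ih ⊢
    exact ⟨by group, ih⟩

end HurwitzAux

open HurwitzAux in
/-- **Lemma 6.** If the product of a factorization `F` is central and `F ∼ τ·F'` for some
`F'`, then simultaneous conjugation of `F` by `τ` yields a Hurwitz equivalent
factorization. -/
theorem conj_equiv_of_central {G : Type*} [Group G] (τ : G) (F : List G)
    (hcentral : F.prod ∈ Subgroup.center G)
    (h : ∃ F' : List G, HurwitzEquiv F (τ :: F')) :
    HurwitzEquiv (fconj F τ) F := by
  obtain ⟨F', h⟩ := h
  have hP : F.prod = τ * F'.prod := by simpa using equiv_prod h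
  have hcomm : ∀ g : G, g * F.prod = F.prod * g := fun g =>
    (Subgroup.mem_center_iff.mp hcentral) g
  -- conjugate of F is equivalent to τ :: fconj F' τ
  have h1 : HurwitzEquiv (fconj F τ) (τ :: fconj F' τ) := by
    have := equiv_fconj τ h
    simpa [fconj] using this
  -- slide τ forward through fconj F' τ, un-conjugating it
  have h2 : HurwitzEquiv (τ :: fconj F' τ) (F' ++ [τ]) := by
    have := slide_forward (fconj F' τ) τ
    rwa [fconj_fconj] at this
  -- slide τ backward through F'; centrality makes the conjugate equal τ
  have h3 : HurwitzEquiv (τ :: F') (F' ++ [τ]) := by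
    have := slide_backward F' τ
    have hc : F'.prod⁻¹ * τ * F'.prod = τ := by
      have hF' : F'.prod = τ⁻¹ * F.prod := by rw [hP]; group
      rw [hF']
      calc (τ⁻¹ * F.prod)⁻¹ * τ * (τ⁻¹ * F.prod)
          = F.prod⁻¹ * (τ * F.prod) := by group
        _ = F.prod⁻¹ * (F.prod * τ) := by rw [hcomm τ]
        _ = τ := by group
    rwa [hc] at this
  exact Relation.EqvGen.trans _ _ _ h1
    (Relation.EqvGen.trans _ _ _ h2
      (Relation.EqvGen.symm _ _ (Relation.EqvGen.trans _ _ _ h h3)))
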